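/- Let {x_k} be a sequence of ℝ^n-valued random variables and X* ⊆ ℝ^n. Suppose that for every z ∈ X*, the sequence {‖x_k - z‖} converges almost surely, and that almost surely every cluster point of {x_k} lies in X*. Then {x_k} converges almost surely to an X*-valued random variable. -/
import Mathlib


open MeasureTheory Filter

/-- Stochastic Fejér monotonicity: a.s. convergence of the whole sequence. -/
theorem stmt17 {n : ℕ} {Ω : Type*} [MeasurableSpace Ω] (μ : Measure Ω)
    [IsProbabilityMeasure μ]
    (x : ℕ → Ω → EuclideanSpace ℝ (Fin n)) (hmeas : ∀ k, Measurable (x k))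
    (Xstar : Set (EuclideanSpace ℝ (Fin n))) (hne : Xstar.Nonempty)
    (hfejer : ∀ z ∈ Xstar, ∀ᵐ ω ∂μ,
      ∃ c : ℝ, Tendsto (fun k => ‖x k ω - z‖) atTop (nhds c))
    (hcluster : ∀ᵐ ω ∂μ, ∀ y, MapClusterPt y atTop (fun k => x k ω) → y ∈ Xstar) :
    ∃ xbar : Ω → EuclideanSpace ℝ (Fin n), AEMeasurable xbar μ ∧
      ∀ᵐ ω ∂μ, xbar ω ∈ Xstar ∧
        Tendsto (fun k => x k ω) atTop (nhds (xbar ω)) := by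
  classical
  obtain ⟨z0, hz0⟩ := hne
  -- countable dense subset Z of Xstar
  obtain ⟨Z, hZsub, hZcount, hZdense⟩ :=
    (TopologicalSpace.IsSeparable.of_separableSpace Xstar).exists_countable_dense_subset
  -- the a.e. event
  have hZae : ∀ᵐ ω ∂μ, ∀ z ∈ Z,
      ∃ c : ℝ, Tendsto (fun k => ‖x k ω - z‖) atTop (nhds c) :=
    (ae_ball_iff hZcount).mpr (fun z hz => hfejer z (hZsub hz))
  have hz0ae := hfejer z0 hz0
  have hgood : ∀ᵐ ω ∂μ, ∃ y ∈ Xstar, Tendsto (fun k => x k ω) atTop (nhds y) := by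
    filter_upwards [hZae, hz0ae, hcluster] with ω hZω hz0ω hclω
    obtain ⟨c0, hc0⟩ := hz0ω
    -- the sequence is bounded
    have hbdd : Bornology.IsBounded (Set.range fun k => x k ω) := by
      obtain ⟨M, hM⟩ := hc0.bddAbove_range
      apply Bornology.IsBounded.subset (Metric.isBounded_closedBall (x := z0) (r := M))
      rintro _ ⟨k, rfl⟩
      have : ‖x k ω - z0‖ ≤ M := hM ⟨k, rfl⟩
      simpa [Metric.mem_closedBall, dist_eq_norm] using this
    obtain ⟨a, _, φ, hφ, hφa⟩ := tendsto_subseq_of_bounded hbdd (fun k => Set.mem_range_self k)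
    have haX : a ∈ Xstar :=
      hclω a (MapClusterPt.of_comp (hφ.tendsto_atTop) hφa.mapClusterPt)
    refine ⟨a, haX, ?_⟩
    rw [Metric.tendsto_atTop]
    intro ε hε
    -- pick z ∈ Z close to a
    obtain ⟨z, hzZ, hza⟩ := Metric.mem_closure_iff.1 (hZdense haX) (ε / 3) (by linarith)
    have hzaAZ : dist a z < ε / 3 := by simpa [dist_comm] using hza
    have hzaZA : dist z a < ε / 3 := by simpa [dist_comm] using hza
    obtain ⟨c, hc⟩ := hZω z hzZ
    -- along the subsequence, ‖x_{φ j} - z‖ → ‖a - z‖, hence c = ‖a - z‖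
    have h1 : Tendsto (fun j => ‖x (φ j) ω - z‖) atTop (nhds ‖a - z‖) :=
      ((continuous_norm.comp (continuous_id.sub continuous_const)).continuousAt.tendsto.comp hφa)
    have h2 : Tendsto (fun j => ‖x (φ j) ω - z‖) atTop (nhds c) :=
      hc.comp hφ.tendsto_atTop
    have hceq : c = ‖a - z‖ := tendsto_nhds_unique h2 h1
    have hclt : c < ε / 3 := by
      rw [hceq, ← dist_eq_norm]
      exact hzaAZ
    have hev : ∀ᶠ k in atTop, ‖x k ω - z‖ < 2 * ε / 3 := by
      have := hc (Iio_mem_nhds (show c < 2 * ε / 3 by linarith))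
      filter_upwards [this] with k hk using hk
    obtain ⟨N, hN⟩ := hev.exists_forall_of_atTop
    refine ⟨N, fun k hk => ?_⟩
    have := hN k hk
    calc dist (x k ω) a ≤ dist (x k ω) z + dist z a := dist_triangle _ _ _
      _ < 2 * ε / 3 + ε / 3 := by
          rw [dist_comm z a]
          exact add_lt_add (by simpa [dist_eq_norm] using this) hzaAZ
      _ = ε := by ring
  -- define xbar by choice
  set xbar : Ω → EuclideanSpace ℝ (Fin n) := fun ω =>
    if h : ∃ y ∈ Xstar, Tendsto (fun k => x k ω) atTop (nhds y) then h.choose else z0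
    with hxbar
  have hprop : ∀ᵐ ω ∂μ, xbar ω ∈ Xstar ∧
      Tendsto (fun k => x k ω) atTop (nhds (xbar ω)) := by
    filter_upwards [hgood] with ω hω
    rw [hxbar]
    simp only [dif_pos hω]
    exact ⟨hω.choose_spec.1, hω.choose_spec.2⟩
  refine ⟨xbar, ?_, hprop⟩
  exact aemeasurable_of_tendsto_metrizable_ae _ (fun k => (hmeas k).aemeasurable)
    (hprop.mono fun ω h => h.2)
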